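/- Let D̃ be a real symmetric positive definite n×n matrix with eigenvalues in [m, ℓ], 0 < m ≤ ℓ, and for β > 0 define K̃ = (β⁻¹D̃ + I)⁻¹ − (βD̃⁻¹ + I)⁻¹. Then K̃ is symmetric and ‖K̃‖ = (γ-1)/(γ+1) where γ = max{β/m, ℓ/β}. -/

import Mathlib

open scoped Matrix Matrix.Norms.L2Operator

lemma my_diag_norm {n : ℕ} (w : Fin n → ℝ) (c : ℝ) (hc : 0 ≤ c)
    (hub : ∀ i, |w i| ≤ c) (hex : ∃ i, |w i| = c) :
    ‖Matrix.diagonal w‖ = c := by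
  obtain ⟨j, hj⟩ := hex
  refine le_antisymm ?_ ?_
  · rw [Matrix.l2_opNorm_def]
    refine ContinuousLinearMap.opNorm_le_bound _ hc fun x => ?_
    have hrhs : c * ‖x‖ = Real.sqrt (∑ i, c ^ 2 * ‖x i‖ ^ 2) := by
      rw [EuclideanSpace.norm_eq, ← Finset.mul_sum, Real.sqrt_mul (sq_nonneg c),
        Real.sqrt_sq hc]
    have hlhs : ‖(Matrix.toEuclideanLin ≪≫ₗ LinearMap.toContinuousLinearMap)
        (Matrix.diagonal w) x‖ = Real.sqrt (∑ i, ‖w i * x i‖ ^ 2) := by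
      rw [EuclideanSpace.norm_eq]
      congr 1
      refine Finset.sum_congr rfl fun i _ => ?_
      congr 2
      simp [Matrix.toEuclideanLin_apply, Matrix.mulVec_diagonal]
    rw [hlhs, hrhs]
    apply Real.sqrt_le_sqrt
    refine Finset.sum_le_sum fun i _ => ?_
    rw [norm_mul]
    have h1 : ‖w i‖ ≤ c := hub i
    have h2 : (0:ℝ) ≤ ‖x i‖ := norm_nonneg _
    rw [mul_pow]
    exact mul_le_mul_of_nonneg_right (by nlinarith [norm_nonneg (w i)]) (sq_nonneg _)
  · have h := Matrix.l2_opNorm_mulVec (Matrix.diagonal w) (EuclideanSpace.single j 1)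
    have hx : ‖(EuclideanSpace.single j (1:ℝ))‖ = 1 := by
      simp [EuclideanSpace.norm_single]
    have hmv : (EuclideanSpace.equiv (Fin n) ℝ).symm
        (Matrix.diagonal w *ᵥ (EuclideanSpace.single j 1)) =
        EuclideanSpace.single j (w j) := by
      ext i
      by_cases hij : i = j
      · subst hij; simp [Matrix.mulVec_diagonal, EuclideanSpace.single_apply]
      · simp [Matrix.mulVec_diagonal, EuclideanSpace.single_apply, hij]
    rw [hmv, hx, mul_one, EuclideanSpace.norm_single] at h
    rw [← hj]
    exact h

/-- Let `D̃` be real symmetric positive definite with extreme eigenvalues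
`m ≤ ℓ` (`0 < m`), and for `β > 0` define
`K̃ = (β⁻¹•D̃ + I)⁻¹ − (β•D̃⁻¹ + I)⁻¹`. Then `K̃` is symmetric and its
spectral norm is `(γ-1)/(γ+1)` where `γ = max{β/m, ℓ/β}`. -/
theorem Ktilde_symm_and_norm (n : ℕ) (D : Matrix (Fin n) (Fin n) ℝ)
    (hD : D.IsHermitian) (hpd : D.PosDef)
    (m ℓ : ℝ) (hm : 0 < m) (hmℓ : m ≤ ℓ)
    (hbound : ∀ i, hD.eigenvalues i ∈ Set.Icc m ℓ)
    (hmin : ∃ i, hD.eigenvalues i = m) (hmax : ∃ i, hD.eigenvalues i = ℓ)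
    (β : ℝ) (hβ : 0 < β) :
    ((β⁻¹ • D + 1)⁻¹ - (β • D⁻¹ + 1)⁻¹).IsHermitian ∧
    ‖(β⁻¹ • D + 1)⁻¹ - (β • D⁻¹ + 1)⁻¹‖ =
      (max (β / m) (ℓ / β) - 1) / (max (β / m) (ℓ / β) + 1) := by
  classical
  have hlampos : ∀ i, 0 < hD.eigenvalues i := fun i => hpd.eigenvalues_pos i
  set lam := hD.eigenvalues with hlam
  set V : Matrix (Fin n) (Fin n) ℝ := (hD.eigenvectorUnitary : Matrix (Fin n) (Fin n) ℝ) with hVdef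
  have hVmem : V ∈ unitary (Matrix (Fin n) (Fin n) ℝ) := hD.eigenvectorUnitary.2
  have hVsV : V * star V = 1 := Unitary.mul_star_self_of_mem hVmem
  have hsVV : star V * V = 1 := Unitary.star_mul_self_of_mem hVmem
  have hVinv : V⁻¹ = star V := Matrix.inv_eq_left_inv hsVV
  have hsVinv : (star V)⁻¹ = V := Matrix.inv_eq_left_inv hVsV
  have conj_inv : ∀ M : Matrix (Fin n) (Fin n) ℝ,
      (V * M * star V)⁻¹ = V * M⁻¹ * star V := by
    intro M
    rw [Matrix.mul_inv_rev, Matrix.mul_inv_rev, hVinv, hsVinv, mul_assoc]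
  have hDspec : D = V * Matrix.diagonal lam * star V := by
    conv_lhs => rw [hD.spectral_theorem]
    simp [Function.comp_def]
    rfl
  have conj_aff : ∀ (a : ℝ) (v : Fin n → ℝ),
      a • (V * Matrix.diagonal v * star V) + 1 =
        V * Matrix.diagonal (fun i => a * v i + 1) * star V := by
    intro a v
    have hd : Matrix.diagonal (fun i => a * v i + 1) =
        a • Matrix.diagonal v + 1 := by
      rw [← Matrix.diagonal_smul, ← Matrix.diagonal_one, ← Matrix.diagonal_add]
      rfl
    rw [hd, Matrix.mul_add, Matrix.add_mul, Matrix.mul_one, hVsV,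
      mul_smul_comm, smul_mul_assoc]
  have diag_inv : ∀ v : Fin n → ℝ, (∀ i, v i ≠ 0) →
      (Matrix.diagonal v)⁻¹ = Matrix.diagonal fun i => (v i)⁻¹ := by
    intro v hv
    apply Matrix.inv_eq_left_inv
    rw [Matrix.diagonal_mul_diagonal, ← Matrix.diagonal_one]
    exact congrArg Matrix.diagonal (funext fun i => inv_mul_cancel₀ (hv i))
  have conj_diag_inv : ∀ v : Fin n → ℝ, (∀ i, v i ≠ 0) →
      (V * Matrix.diagonal v * star V)⁻¹ =
        V * Matrix.diagonal (fun i => (v i)⁻¹) * star V := by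
    intro v hv
    rw [conj_inv, diag_inv v hv]
  have e1 : (β⁻¹ • D + 1)⁻¹ =
      V * Matrix.diagonal (fun i => (β⁻¹ * lam i + 1)⁻¹) * star V := by
    rw [hDspec, conj_aff, conj_diag_inv _
      (fun i => by have := hlampos i; positivity)]
  have e2 : D⁻¹ = V * Matrix.diagonal (fun i => (lam i)⁻¹) * star V := by
    rw [hDspec, conj_diag_inv _ (fun i => (hlampos i).ne')]
  have e3 : (β • D⁻¹ + 1)⁻¹ =
      V * Matrix.diagonal (fun i => (β * (lam i)⁻¹ + 1)⁻¹) * star V := by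
    rw [e2, conj_aff, conj_diag_inv _
      (fun i => by have := hlampos i; positivity)]
  set w : Fin n → ℝ := fun i => (β⁻¹ * lam i + 1)⁻¹ - (β * (lam i)⁻¹ + 1)⁻¹ with hw
  have Kspec : (β⁻¹ • D + 1)⁻¹ - (β • D⁻¹ + 1)⁻¹ = V * Matrix.diagonal w * star V := by
    rw [e1, e3, ← Matrix.sub_mul, ← Matrix.mul_sub, ← Matrix.diagonal_sub]
  set γ : ℝ := max (β / m) (ℓ / β) with hγdef
  have hγ1 : 1 ≤ γ := by
    rcases le_total m β with h | h
    · exact le_trans (by rw [le_div_iff₀ hm]; linarith) (le_max_left _ _)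
    · exact le_trans (by rw [le_div_iff₀ hβ]; linarith) (le_max_right _ _)
  have hγm : β ≤ γ * m := by
    have := le_max_left (β / m) (ℓ / β)
    rw [hγdef]; rw [div_le_iff₀ hm] at this; linarith
  have hγβ : ℓ ≤ γ * β := by
    have := le_max_right (β / m) (ℓ / β)
    rw [hγdef]; rw [div_le_iff₀ hβ] at this; linarith
  have hc : 0 ≤ (γ - 1) / (γ + 1) := div_nonneg (by linarith) (by linarith)
  have hgfun : ∀ x : ℝ, 0 < x →
      (β⁻¹ * x + 1)⁻¹ - (β * x⁻¹ + 1)⁻¹ = (β - x) / (β + x) := by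
    intro x hx
    have h1 : β⁻¹ * x + 1 = (x + β) / β := by field_simp
    have h2 : β * x⁻¹ + 1 = (β + x) / x := by field_simp
    rw [h1, h2, inv_div, inv_div]
    rw [div_sub_div _ _ (by positivity) (by positivity)]
    rw [div_eq_div_iff (by positivity) (by positivity)]
    ring
  have hub : ∀ i, |w i| ≤ (γ - 1) / (γ + 1) := by
    intro i
    have hx1 := (hbound i).1
    have hx2 := (hbound i).2
    have hxpos := hlampos i
    rw [hw]
    simp only
    rw [hgfun _ hxpos, abs_div, abs_of_pos (by linarith : (0:ℝ) < β + lam i)]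
    rw [div_le_div_iff₀ (by linarith) (by linarith)]
    rcases abs_cases (β - lam i) with ⟨he, _⟩ | ⟨he, _⟩ <;> rw [he] <;> nlinarith
  have key : ∀ a b : ℝ, 0 < a → 0 < b →
      (b - a) / (b + a) = (b / a - 1) / (b / a + 1) := by
    intro a b ha hb
    rw [div_eq_div_iff (by linarith) (by positivity)]
    field_simp
  have hex : ∃ i, |w i| = (γ - 1) / (γ + 1) := by
    rcases le_total (ℓ / β) (β / m) with h | h
    · have hγ : γ = β / m := max_eq_left h
      obtain ⟨i, hi⟩ := hmin
      refine ⟨i, ?_⟩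
      have hmβ : m ≤ β := by rw [hγ, le_div_iff₀ hm] at hγ1; linarith
      rw [hw]
      simp only
      rw [hgfun _ (hlampos i), hi,
        abs_of_nonneg (div_nonneg (by linarith) (by linarith)), hγ]
      exact key m β hm hβ
    · have hγ : γ = ℓ / β := max_eq_right h
      obtain ⟨i, hi⟩ := hmax
      refine ⟨i, ?_⟩
      have hℓ : 0 < ℓ := lt_of_lt_of_le hm hmℓ
      have hβℓ : β ≤ ℓ := by rw [hγ, le_div_iff₀ hβ] at hγ1; linarith
      rw [hw]
      simp only
      rw [hgfun _ (hlampos i), hi, abs_div,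
        abs_of_nonpos (by linarith : β - ℓ ≤ 0),
        abs_of_pos (by linarith : (0:ℝ) < β + ℓ), neg_sub, add_comm β ℓ, hγ]
      exact key β ℓ hβ hℓ
  constructor
  · rw [Kspec, Matrix.star_eq_conjTranspose]
    exact Matrix.isHermitian_mul_mul_conjTranspose V (Matrix.isHermitian_diagonal w)
  · rw [Kspec,
      CStarRing.norm_mul_mem_unitary _ (Unitary.star_mem hVmem),
      CStarRing.norm_mem_unitary_mul _ hVmem]
    exact my_diag_norm w _ hc hub hex
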